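/- arXiv:2302.13426 — 5 statements merged into one kernel-verified Lean document; each statement's English description precedes it below -/
import Mathlib

section
/- Fix an integer I ≥ 2, a real α > 0, and i ∈ {1,…,I}. Let X be a standard Gaussian random vector on ℝ^I and set ω = α·Q·e_i + X. Define the random vector p(ω) ∈ ℝ^I by p_j(ω) = exp(⟨αQe_j, ω⟩ − (α²/2)⟨e_j, Qe_j⟩) / Σ_{k=1}^I exp(⟨αQe_k, ω⟩ − (α²/2)⟨e_k, Qe_k⟩). Then the probability law of p(ω) coincides with the probability law of softmax(α²·e_i + Z), where Z is a centered multivariate Gaussian vector on ℝ^I with covariance matrix α²Q. (Canonical logistic-normal law of the market maker's equilibrium posterior.) -/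
open MeasureTheory ProbabilityTheory Matrix

noncomputable section

/-- The standard Gaussian measure on `ℝ^I` (mean 0, identity covariance). -/
def stdGaussian (I : ℕ) : Measure (Fin I → ℝ) :=
  Measure.pi fun _ => gaussianReal 0 1

/-- The matrix `Q = Id − (1/I)·𝟙𝟙ᵀ`. -/
def Qmat (I : ℕ) : Matrix (Fin I) (Fin I) ℝ :=
  1 - (I : ℝ)⁻¹ • Matrix.of fun _ _ => (1 : ℝ)

/-- `softmax(v)_j = e^{v_j} / Σ_k e^{v_k}`. -/
def softmax {I : ℕ} (v : Fin I → ℝ) : Fin I → ℝ :=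
  fun j => Real.exp (v j) / ∑ k, Real.exp (v k)

/-- The law of the centered Gaussian vector `Z` on `ℝ^I` with covariance matrix `α²Q`
(realized as `α·Q·x` with `x` standard Gaussian; since `Q` is a symmetric projection,
the covariance of `α·Q·x` is `α²Q`). -/
def lawZ (I : ℕ) (α : ℝ) : Measure (Fin I → ℝ) :=
  (stdGaussian I).map fun x => α • (Qmat I).mulVec x

/-- The market maker's equilibrium posterior, as a function of the order flow `ω`:
`p_j(ω) = exp(⟨αQe_j, ω⟩ − (α²/2)⟨e_j, Qe_j⟩) / Σ_k exp(⟨αQe_k, ω⟩ − (α²/2)⟨e_k, Qe_k⟩)`.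
Here `(Qe_j)_k = Q_{kj}` and `⟨e_j, Qe_j⟩ = Q_{jj}`. -/
def postEq (I : ℕ) (α : ℝ) (ω : Fin I → ℝ) : Fin I → ℝ :=
  fun j => Real.exp (α * (∑ k, Qmat I k j * ω k) - α ^ 2 / 2 * Qmat I j j) /
    ∑ l, Real.exp (α * (∑ k, Qmat I k l * ω k) - α ^ 2 / 2 * Qmat I l l)

lemma Qmat_apply (I : ℕ) (k j : Fin I) :
    Qmat I k j = (if k = j then (1:ℝ) else 0) - (I : ℝ)⁻¹ := by
  simp [Qmat, Matrix.one_apply, Matrix.sub_apply]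

lemma Qmat_symm (I : ℕ) (k j : Fin I) : Qmat I k j = Qmat I j k := by
  simp [Qmat_apply, eq_comm]

lemma Qmat_sum (I : ℕ) (hI : 2 ≤ I) (j i : Fin I) :
    ∑ k, Qmat I k j * Qmat I k i = Qmat I j i := by
  have hI' : (I : ℝ) ≠ 0 := by positivity
  simp only [Qmat_apply, sub_mul, mul_sub, Finset.sum_sub_distrib]
  simp [Finset.sum_ite_eq', ite_mul, mul_ite, Finset.card_univ]
  field_simp
  simp [eq_comm]

lemma shift_eq {I : ℕ} (u v : Fin I → ℝ) (c : ℝ) (h : ∀ j, u j = v j + c) :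
    (fun j => Real.exp (u j) / ∑ l, Real.exp (u l)) = softmax v := by
  funext j
  simp only [softmax, h, Real.exp_add]
  rw [← Finset.sum_mul]
  rw [mul_div_mul_right _ _ (Real.exp_ne_zero c)]

lemma measurable_f (I : ℕ) (α : ℝ) : Measurable fun x : Fin I → ℝ => α • (Qmat I).mulVec x := by
  apply measurable_pi_lambda
  intro j
  simp only [Pi.smul_apply, Matrix.mulVec, dotProduct]
  exact (Finset.measurable_sum _ fun k _ => (measurable_pi_apply k).const_mul _).const_mul _

lemma measurable_g (I : ℕ) (v : Fin I → ℝ) :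
    Measurable fun z : Fin I → ℝ => softmax (v + z) := by
  apply measurable_pi_lambda
  intro j
  simp only [softmax, Pi.add_apply]
  exact (Real.measurable_exp.comp ((measurable_pi_apply j).const_add _)).div
    (Finset.measurable_sum _ fun l _ => Real.measurable_exp.comp ((measurable_pi_apply l).const_add _))

/-- Canonical logistic-normal law of the market maker's equilibrium posterior: with
`ω = α·Q·e_i + X` for a standard Gaussian vector `X`, the law of `p(ω)` coincides with
the law of `softmax(α²·e_i + Z)` where `Z` is centered Gaussian with covariance `α²Q`. -/
theorem canonical_posterior_law (I : ℕ) (hI : 2 ≤ I) (α : ℝ) (hα : 0 < α) (i : Fin I) :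
    (stdGaussian I).map
        (fun x => postEq I α (α • (fun k => Qmat I k i) + x)) =
      (lawZ I α).map
        (fun z => softmax (α ^ 2 • (Pi.single i 1 : Fin I → ℝ) + z)) := by
  rw [lawZ, Measure.map_map (measurable_g I _) (measurable_f I α)]
  congr 1
  funext x
  show postEq I α _ = softmax _
  unfold postEq
  apply shift_eq _ _ (-α ^ 2 * (I : ℝ)⁻¹ - α ^ 2 / 2 * (1 - (I : ℝ)⁻¹))
  intro j
  have h1 : (∑ k, Qmat I k j * ((α • (fun k => Qmat I k i) + x) k))
      = α * Qmat I j i + (Qmat I).mulVec x j := by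
    simp only [Pi.add_apply, Pi.smul_apply, smul_eq_mul, mul_add, Finset.sum_add_distrib]
    congr 1
    · rw [← Qmat_sum I hI j i, Finset.mul_sum]
      exact Finset.sum_congr rfl fun k _ => by ring
    · simp only [Matrix.mulVec, dotProduct]
      exact Finset.sum_congr rfl fun k _ => by rw [Qmat_symm]
  rw [h1]
  simp only [Function.comp_apply, Pi.add_apply, Pi.smul_apply, smul_eq_mul,
    Pi.single_apply, Qmat_apply]
  split_ifs <;> ring


end
end

section
/- (No-arbitrage.) Let a < b be reals, n ∈ ℕ, let φ_1,…,φ_n : [a,b] → ℝ and η : [a,b] → ℝ be continuous, and let F : [a,b] × ℝ^n → ℝ be such that x ↦ F(x,c) is continuous for every c ∈ ℝ^n. For continuous W : [a,b] → ℝ define the overlap vector K(W) = (∫_a^b W(x)φ_i(x) dx)_{i=1,…,n} ∈ ℝ^n and the expected utility J(W) = ∫_a^b W(x)·(η(x) − F(x, K(W))) dx. If there exist continuous W₁, W₂ : [a,b] → ℝ with K(W₁) = K(W₂) and J(W₁) ≠ J(W₂), then J is unbounded above: for every M ∈ ℝ there exists a continuous W : [a,b] → ℝ with J(W) > M. -/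
open MeasureTheory Set

noncomputable section

/-- The overlap vector `K(W) = (∫_a^b W(x)φ_i(x) dx)_{i=1,…,n}` of a portfolio `W` with the
market maker's noise-adjusted beliefs `φ_1, …, φ_n`. -/
def overlapVec (a b : ℝ) (n : ℕ) (φ : Fin n → ℝ → ℝ) (W : ℝ → ℝ) : Fin n → ℝ :=
  fun i => ∫ x in a..b, W x * φ i x

/-- The insider's expected utility `J(W) = ∫_a^b W(x)·(η(x) − F(x, K(W))) dx`, where the
expected Arrow–Debreu prices depend on `W` only through the overlap vector `K(W)`. -/
def expectedUtility (a b : ℝ) (n : ℕ) (φ : Fin n → ℝ → ℝ) (η : ℝ → ℝ)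
    (F : ℝ → (Fin n → ℝ) → ℝ) (W : ℝ → ℝ) : ℝ :=
  ∫ x in a..b, W x * (η x - F x (overlapVec a b n φ W))

/-- No-arbitrage: if two portfolios have the same overlap vector but different expected
utilities, then the insider's expected utility is unbounded above over continuous
portfolios. -/
theorem no_arbitrage (a b : ℝ) (hab : a < b) (n : ℕ)
    (φ : Fin n → ℝ → ℝ) (η : ℝ → ℝ) (F : ℝ → (Fin n → ℝ) → ℝ)
    (hφ : ∀ i, ContinuousOn (φ i) (Icc a b))
    (hη : ContinuousOn η (Icc a b))
    (hF : ∀ c : Fin n → ℝ, ContinuousOn (fun x => F x c) (Icc a b))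
    (W₁ W₂ : ℝ → ℝ)
    (hW₁ : ContinuousOn W₁ (Icc a b)) (hW₂ : ContinuousOn W₂ (Icc a b))
    (hK : overlapVec a b n φ W₁ = overlapVec a b n φ W₂)
    (hJ : expectedUtility a b n φ η F W₁ ≠ expectedUtility a b n φ η F W₂) :
    ∀ M : ℝ, ∃ W : ℝ → ℝ, ContinuousOn W (Icc a b) ∧
      M < expectedUtility a b n φ η F W := by
  intro M
  have hab' : a ≤ b := hab.le
  have huIcc : uIcc a b = Icc a b := uIcc_of_le hab'
  have hInt : ∀ (W g : ℝ → ℝ), ContinuousOn W (Icc a b) → ContinuousOn g (Icc a b) →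
      IntervalIntegrable (fun x => W x * g x) volume a b := by
    intro W g hW hg
    exact ContinuousOn.intervalIntegrable (by rw [huIcc]; exact hW.mul hg)
  set c := overlapVec a b n φ W₂ with hc
  set g : ℝ → ℝ := fun x => η x - F x c with hg
  have hgc : ContinuousOn g (Icc a b) := hη.sub (hF c)
  set J₁ := ∫ x in a..b, W₁ x * g x with hJ₁
  set J₂ := ∫ x in a..b, W₂ x * g x with hJ₂
  have hJ1 : expectedUtility a b n φ η F W₁ = J₁ := by
    rw [expectedUtility, hK]
  have hJ2 : expectedUtility a b n φ η F W₂ = J₂ := rfl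
  set δ := J₁ - J₂ with hδ
  have hδ0 : δ ≠ 0 := by
    intro h
    apply hJ
    rw [hJ1, hJ2]
    linarith [sub_eq_zero.mp h]
  set t : ℝ := (M + 1 - J₂) / δ with ht
  refine ⟨fun x => W₂ x + t * (W₁ x - W₂ x), hW₂.add (continuousOn_const.mul (hW₁.sub hW₂)), ?_⟩
  -- a general linearity computation
  have key : ∀ h : ℝ → ℝ, ContinuousOn h (Icc a b) →
      (∫ x in a..b, (W₂ x + t * (W₁ x - W₂ x)) * h x)
        = (∫ x in a..b, W₂ x * h x) + t * ((∫ x in a..b, W₁ x * h x) - ∫ x in a..b, W₂ x * h x) := by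
    intro h hh
    have h1 := hInt W₁ h hW₁ hh
    have h2 := hInt W₂ h hW₂ hh
    have : (fun x => (W₂ x + t * (W₁ x - W₂ x)) * h x)
        = fun x => W₂ x * h x + t * (W₁ x * h x - W₂ x * h x) := by
      funext x; ring
    rw [this, intervalIntegral.integral_add h2 (((h1.sub h2)).const_mul t),
      intervalIntegral.integral_const_mul, intervalIntegral.integral_sub h1 h2]
  have hKW : overlapVec a b n φ (fun x => W₂ x + t * (W₁ x - W₂ x)) = c := by
    funext i
    have := key (φ i) (hφ i)
    have hKi : (∫ x in a..b, W₁ x * φ i x) = ∫ x in a..b, W₂ x * φ i x :=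
      congrFun hK i
    simp only [overlapVec] at this ⊢
    rw [this, hKi]
    simp [c, overlapVec]
  have hJW : expectedUtility a b n φ η F (fun x => W₂ x + t * (W₁ x - W₂ x))
      = J₂ + t * δ := by
    rw [expectedUtility, hKW]
    exact key g hgc
  rw [hJW, ht]
  have : (M + 1 - J₂) / δ * δ = M + 1 - J₂ := div_mul_cancel₀ _ hδ0
  rw [this]
  linarith


end
end

section
/- Let (Ω, ℱ, P) be a probability space, I ≥ 1 an integer, and p : Ω → ℝ^I a measurable random vector with p_j ≥ 0 for all j and Σ_{j=1}^I p_j = 1 almost surely. Define the I×I matrix S by S_{jj} = E[p_j] for all j and S_{jk} = −E[p_j p_k] for j ≠ k. Then S is symmetric positive semidefinite. -/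
open MeasureTheory Matrix

noncomputable section

/-- Pointwise key inequality: for a probability vector `q`,
the quadratic form `∑ q_j x_j² − ∑_{j≠k} q_j q_k x_j x_k` is nonnegative. -/
lemma hessian_factor_pointwise {I : ℕ} (x q : Fin I → ℝ)
    (hq : ∀ j, 0 ≤ q j) (hs : ∑ j, q j = 1) :
    0 ≤ ∑ j, ∑ k, x j * (if j = k then q j else -(q j * q k)) * x k := by
  classical
  have cs : (∑ j, Real.sqrt (q j) * (Real.sqrt (q j) * x j)) ^ 2 ≤
      (∑ j, Real.sqrt (q j) ^ 2) * ∑ j, (Real.sqrt (q j) * x j) ^ 2 :=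
    Finset.sum_mul_sq_le_sq_mul_sq _ _ _
  have h1 : ∀ j, Real.sqrt (q j) * (Real.sqrt (q j) * x j) = q j * x j := by
    intro j; rw [← mul_assoc, Real.mul_self_sqrt (hq j)]
  have h2 : ∀ j, Real.sqrt (q j) ^ 2 = q j := fun j => Real.sq_sqrt (hq j)
  have h3 : ∀ j, (Real.sqrt (q j) * x j) ^ 2 = q j * x j ^ 2 := by
    intro j; rw [mul_pow, h2]
  simp only [h1, h2, h3, hs, one_mul] at cs
  -- cs : (∑ j, q j * x j) ^ 2 ≤ ∑ j, q j * x j ^ 2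
  have expand : ∀ j k : Fin I, x j * (if j = k then q j else -(q j * q k)) * x k
      = (if j = k then x j * (q j + q j * q j) * x k else 0)
        - (x j * q j) * (q k * x k) := by
    intro j k
    by_cases h : j = k
    · subst h; simp; ring
    · simp [h]; ring
  have hsum : (∑ j, ∑ k, x j * (if j = k then q j else -(q j * q k)) * x k)
      = (∑ j, x j * (q j + q j * q j) * x j) - (∑ j, q j * x j) ^ 2 := by
    simp_rw [expand, Finset.sum_sub_distrib]
    congr 1
    · refine Finset.sum_congr rfl fun j _ => ?_
      simp
    · rw [sq, Finset.sum_mul_sum]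
      exact Finset.sum_congr rfl fun j _ => Finset.sum_congr rfl fun k _ => by ring
  rw [hsum]
  have hA : (∑ j, x j * (q j + q j * q j) * x j)
      = (∑ j, q j * x j ^ 2) + ∑ j, q j * q j * x j ^ 2 := by
    rw [← Finset.sum_add_distrib]
    exact Finset.sum_congr rfl fun j _ => by ring
  have hB : 0 ≤ ∑ j, q j * q j * x j ^ 2 :=
    Finset.sum_nonneg fun j _ => mul_nonneg (mul_nonneg (hq j) (hq j)) (sq_nonneg _)
  rw [hA]
  linarith

/-- If `p` is a measurable random probability vector on `{1,…,I}` (nonnegative entries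
summing to one almost surely), then the matrix `S` with `S_{jj} = E[p_j]` and
`S_{jk} = −E[p_j p_k]` for `j ≠ k` is symmetric positive semidefinite. -/
theorem hessian_factor_posSemidef
    {Ω : Type*} [MeasurableSpace Ω] (P : Measure Ω) [IsProbabilityMeasure P]
    (I : ℕ) (hI : 1 ≤ I) (p : Ω → Fin I → ℝ) (hmeas : Measurable p)
    (hp : ∀ᵐ ω ∂P, (∀ j, 0 ≤ p ω j) ∧ ∑ j, p ω j = 1) :
    (Matrix.of fun j k =>
        if j = k then ∫ ω, p ω j ∂P else -∫ ω, p ω j * p ω k ∂P).PosSemidef := by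
  classical
  -- a.e. bounds
  have hbd : ∀ᵐ ω ∂P, ∀ j, p ω j ∈ Set.Icc (0:ℝ) 1 := by
    filter_upwards [hp] with ω hω j
    refine ⟨hω.1 j, ?_⟩
    calc p ω j ≤ ∑ i, p ω i :=
          Finset.single_le_sum (fun i _ => hω.1 i) (Finset.mem_univ j)
      _ = 1 := hω.2
  have hmj : ∀ j, Measurable fun ω => p ω j := fun j => (measurable_pi_apply j).comp hmeas
  have hint : ∀ j, Integrable (fun ω => p ω j) P := by
    intro j
    refine Integrable.mono' (integrable_const 1) (hmj j).aestronglyMeasurable ?_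
    filter_upwards [hbd] with ω hω
    rw [Real.norm_eq_abs, abs_le]
    exact ⟨le_trans (by norm_num) (hω j).1, (hω j).2⟩
  have hint2 : ∀ j k, Integrable (fun ω => p ω j * p ω k) P := by
    intro j k
    refine Integrable.mono' (integrable_const 1) ((hmj j).mul (hmj k)).aestronglyMeasurable ?_
    filter_upwards [hbd] with ω hω
    rw [Real.norm_eq_abs, abs_le]
    constructor
    · linarith [mul_nonneg (hω j).1 (hω k).1]
    · calc p ω j * p ω k ≤ 1 * 1 :=
            mul_le_mul (hω j).2 (hω k).2 (hω k).1 zero_le_one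
        _ = 1 := by ring
  constructor
  · -- Hermitian (symmetric)
    ext j k
    simp only [conjTranspose_apply, of_apply, star_trivial]
    by_cases h : j = k
    · simp [h]
    · simp only [h, Ne.symm h, if_false]
      congr 1
      exact integral_congr_ae (Filter.Eventually.of_forall fun ω => mul_comm _ _)
  · intro x
    simp only [star_trivial, dotProduct, mulVec, of_apply]
    simp only [Finsupp.sum_fintype, zero_mul, mul_zero, Finset.sum_const_zero, implies_true]
    simp_rw [mul_assoc, ← Finset.mul_sum]
    -- rewrite each entry as a single integral
    have hentry : ∀ j k, (if j = k then ∫ ω, p ω j ∂P else -∫ ω, p ω j * p ω k ∂P)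
        = ∫ ω, (if j = k then p ω j else -(p ω j * p ω k)) ∂P := by
      intro j k
      by_cases h : j = k
      · simp [h]
      · simp only [h, if_false]
        rw [integral_neg]
    have heint : ∀ j k, Integrable (fun ω => (if j = k then p ω j else -(p ω j * p ω k))) P := by
      intro j k
      by_cases h : j = k
      · simpa [h] using hint j
      · simp only [h, if_false]
        exact (hint2 j k).neg
    have hterm : ∀ j k, x j * ((if j = k then ∫ ω, p ω j ∂P
          else -∫ ω, p ω j * p ω k ∂P) * x k)
        = ∫ ω, x j * (if j = k then p ω j else -(p ω j * p ω k)) * x k ∂P := by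
      intro j k
      rw [hentry j k, ← integral_mul_const, ← integral_const_mul]
      simp_rw [mul_assoc]
    have hrw : (∑ j, x j * ∑ k, (if j = k then ∫ ω, p ω j ∂P
          else -∫ ω, p ω j * p ω k ∂P) * x k)
        = ∫ ω, ∑ j, ∑ k, x j * (if j = k then p ω j else -(p ω j * p ω k)) * x k ∂P := by
      simp_rw [Finset.mul_sum, hterm]
      have h1 : ∀ j, (∑ k, ∫ ω, x j * (if j = k then p ω j else -(p ω j * p ω k)) * x k ∂P)
          = ∫ ω, ∑ k, x j * (if j = k then p ω j else -(p ω j * p ω k)) * x k ∂P := fun j =>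
        (integral_finset_sum _ fun k _ =>
          ((heint j k).const_mul (x j)).mul_const (x k)).symm
      simp_rw [h1]
      exact (integral_finset_sum _ fun j _ => integrable_finset_sum _ fun k _ =>
        ((heint j k).const_mul (x j)).mul_const (x k)).symm
    rw [hrw]
    refine integral_nonneg_of_ae ?_
    filter_upwards [hp] with ω hω
    exact hessian_factor_pointwise x (p ω) hω.1 hω.2

end
end

section
/- (Pathwise Young integral.) Let a < b be reals and γ, δ ∈ (0,1] with γ + δ > 1. Let ω : [a,b] → ℝ be γ-Hölder and W : [a,b] → ℝ be δ-Hölder. Then there exists a real number 𝐼 such that the Riemann sums converge to 𝐼 as the mesh tends to zero: for every ε > 0 there exists ρ > 0 such that for every finite partition a = x_0 < x_1 < … < x_n = b with max_k (x_{k+1} − x_k) < ρ, one has | Σ_{k=0}^{n−1} W(x_k)·(ω(x_{k+1}) − ω(x_k)) − 𝐼 | < ε. -/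
open Set

noncomputable def pf (W ω : ℝ → ℝ) (x : ℕ → ℝ) (k : ℕ) : ℝ :=
  W (x k) * (ω (x (k+1)) - ω (x k))

noncomputable def RS (W ω : ℝ → ℝ) (x : ℕ → ℝ) (n : ℕ) : ℝ :=
  ∑ k ∈ Finset.range n, pf W ω x k

lemma mono_of_strict {α : Type*} [Preorder α] (x : ℕ → α) (n : ℕ)
    (h : ∀ k < n, x k < x (k+1)) : ∀ i j, i ≤ j → j ≤ n → x i ≤ x j := by
  intro i j hij hjn
  induction j, hij using Nat.le_induction with
  | base => exact le_refl _
  | succ j hj ih =>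
      exact le_trans (ih (by omega)) (le_of_lt (h j (by omega)))

lemma sum_split3 (f : ℕ → ℝ) (i n : ℕ) (h : i + 1 ≤ n) :
    ∑ k ∈ Finset.range n, f k
      = (∑ k ∈ Finset.range i, f k) + f i + ∑ k ∈ Finset.Ico (i+1) n, f k := by
  rw [Finset.range_eq_Ico,
    ← Finset.sum_Ico_consecutive f (Nat.zero_le i) (by omega : i ≤ n),
    ← Finset.sum_Ico_consecutive f (by omega : i ≤ i+1) (by omega : i+1 ≤ n),
    ← Finset.range_eq_Ico]
  have e1 : ∑ k ∈ Finset.Ico i (i+1), f k = f i := by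
    rw [Finset.sum_Ico_eq_sum_range]; simp
  rw [e1, add_assoc]

lemma removal_sum (W ω : ℝ → ℝ) (x : ℕ → ℝ) (n i : ℕ) (hi : i + 1 < n + 1) :
    RS W ω (fun k => if k < i+1 then x k else x (k+1)) n
      = RS W ω x (n+1) - (W (x (i+1)) - W (x i)) * (ω (x (i+2)) - ω (x (i+1))) := by
  classical
  set y : ℕ → ℝ := fun k => if k < i+1 then x k else x (k+1) with hy
  have hterm1 : ∀ k < i, pf W ω y k = pf W ω x k := by
    intro k hk
    simp only [pf, hy]
    rw [if_pos (by omega), if_pos (by omega)]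
  have hterm2 : pf W ω y i = W (x i) * (ω (x (i+2)) - ω (x i)) := by
    simp only [pf, hy]
    rw [if_pos (by omega), if_neg (by omega)]
  have hterm3 : ∀ k, i + 1 ≤ k → pf W ω y k = pf W ω x (k+1) := by
    intro k hk
    simp only [pf, hy]
    rw [if_neg (by omega), if_neg (by omega)]
  have hsy := sum_split3 (pf W ω y) i n (by omega)
  have hsx := sum_split3 (pf W ω x) i (n+1) (by omega)
  have hsx2 : ∑ k ∈ Finset.Ico (i+1) (n+1), pf W ω x k
      = pf W ω x (i+1) + ∑ k ∈ Finset.Ico (i+2) (n+1), pf W ω x k := by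
    rw [← Finset.sum_Ico_consecutive _ (by omega : i+1 ≤ i+2) (by omega : i+2 ≤ n+1)]
    congr 1
    rw [Finset.sum_Ico_eq_sum_range]; simp
  have hA : ∑ k ∈ Finset.range i, pf W ω y k = ∑ k ∈ Finset.range i, pf W ω x k :=
    Finset.sum_congr rfl fun k hk => hterm1 k (Finset.mem_range.mp hk)
  have hC : ∑ k ∈ Finset.Ico (i+1) n, pf W ω y k
      = ∑ k ∈ Finset.Ico (i+2) (n+1), pf W ω x k := by
    rw [Finset.sum_congr rfl fun k hk => hterm3 k (Finset.mem_Ico.mp hk).1,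
      Finset.sum_Ico_eq_sum_range, Finset.sum_Ico_eq_sum_range]
    have : n - (i+1) = n + 1 - (i+2) := by omega
    rw [this]
    exact Finset.sum_congr rfl fun k _ => by ring_nf
  have lhs_eq : RS W ω y n
      = (∑ k ∈ Finset.range i, pf W ω x k) + W (x i) * (ω (x (i+2)) - ω (x i))
        + ∑ k ∈ Finset.Ico (i+2) (n+1), pf W ω x k := by
    rw [RS, hsy, hA, hterm2, hC]
  have rhs_eq : RS W ω x (n+1)
      = (∑ k ∈ Finset.range i, pf W ω x k) + pf W ω x i + pf W ω x (i+1)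
        + ∑ k ∈ Finset.Ico (i+2) (n+1), pf W ω x k := by
    rw [RS, hsx, hsx2]; ring
  rw [lhs_eq, rhs_eq]
  simp only [pf]
  ring

lemma min_triple (x : ℕ → ℝ) (n : ℕ) (hn : 1 ≤ n)
    (hc : ∀ k < n + 1, x k < x (k+1)) :
    ∃ i, i + 1 < n + 1 ∧ x (i+2) - x i ≤ 2 * (x (n+1) - x 0) / n := by
  by_contra hcon
  push_neg at hcon
  have hlt : ∀ i ∈ Finset.range n, 2 * (x (n+1) - x 0) / n < x (i+2) - x i := by
    intro i hi
    exact hcon i (by simpa using Finset.mem_range.mp hi)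
  have hsum : ∑ i ∈ Finset.range n, (2 * (x (n+1) - x 0) / n)
      < ∑ i ∈ Finset.range n, (x (i+2) - x i) := by
    apply Finset.sum_lt_sum_of_nonempty
    · exact Finset.nonempty_range_iff.mpr (by omega)
    · exact hlt
  have hconst : ∑ _i ∈ Finset.range n, (2 * (x (n+1) - x 0) / n)
      = 2 * (x (n+1) - x 0) := by
    rw [Finset.sum_const, Finset.card_range, nsmul_eq_mul]
    field_simp
  have htel : ∑ i ∈ Finset.range n, (x (i+2) - x i)
      = (x (n+1) - x 1) + (x n - x 0) := by
    have : ∀ i, x (i+2) - x i = (x (i+1+1) - x (i+1)) + (x (i+1) - x i) := by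
      intro i; ring
    rw [Finset.sum_congr rfl fun i _ => this i, Finset.sum_add_distrib,
      Finset.sum_range_sub (fun i => x (i+1)) n, Finset.sum_range_sub x n]
  have h01 : x 0 ≤ x 1 := le_of_lt (hc 0 (by omega))
  have hnn : x n ≤ x (n+1) := le_of_lt (hc n (by omega))
  rw [hconst, htel] at hsum
  linarith

lemma mesh_sum (θ : ℝ) (hθ1 : 1 < θ) (n : ℕ) (x : ℕ → ℝ)
    (hc : ∀ k < n, x k < x (k+1)) (ρ : ℝ)
    (hmesh : ∀ k < n, x (k+1) - x k ≤ ρ) :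
    ∑ k ∈ Finset.range n, (x (k+1) - x k)^θ ≤ ρ^(θ-1) * (x n - x 0) := by
  have hterm : ∀ k < n, (x (k+1) - x k)^θ ≤ ρ^(θ-1) * (x (k+1) - x k) := by
    intro k hk
    have hΔ : 0 < x (k+1) - x k := by linarith [hc k hk]
    have h1 : (x (k+1) - x k)^θ = (x (k+1) - x k)^(θ-1) * (x (k+1) - x k) := by
      have h := Real.rpow_add hΔ (θ-1) 1
      rw [Real.rpow_one, show θ - 1 + 1 = θ by ring] at h
      exact h
    rw [h1]
    apply mul_le_mul_of_nonneg_right _ hΔ.le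
    exact Real.rpow_le_rpow hΔ.le (hmesh k hk) (by linarith)
  calc ∑ k ∈ Finset.range n, (x (k+1) - x k)^θ
      ≤ ∑ k ∈ Finset.range n, ρ^(θ-1) * (x (k+1) - x k) :=
        Finset.sum_le_sum fun k hk => hterm k (Finset.mem_range.mp hk)
    _ = ρ^(θ-1) * (x n - x 0) := by
        rw [← Finset.mul_sum, Finset.sum_range_sub x n]

noncomputable def zfun (s : Finset ℝ) (M : ℕ) (hcard : s.card = M+1) : ℕ → ℝ :=
  fun i => (s.orderIsoOfFin hcard ⟨min i M, Nat.lt_succ_iff.mpr (min_le_right i M)⟩ : ℝ)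

lemma zfun_mem (s : Finset ℝ) (M : ℕ) (hcard : s.card = M+1) (i : ℕ) :
    zfun s M hcard i ∈ s := (s.orderIsoOfFin hcard _).2

lemma zfun_chain (s : Finset ℝ) (M : ℕ) (hcard : s.card = M+1) :
    ∀ i < M, zfun s M hcard i < zfun s M hcard (i+1) := by
  intro i hi
  have := (s.orderIsoOfFin hcard).strictMono
    (a := ⟨min i M, Nat.lt_succ_iff.mpr (min_le_right i M)⟩)
    (b := ⟨min (i+1) M, Nat.lt_succ_iff.mpr (min_le_right (i+1) M)⟩)
    (by rw [Fin.mk_lt_mk]; omega)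
  exact this

lemma index_map (s : Finset ℝ) (M : ℕ) (hcard : s.card = M+1) (x : ℕ → ℝ) (n : ℕ)
    (hxc : ∀ k < n, x k < x (k+1)) (hmem : ∀ k ≤ n, x k ∈ s)
    (hmin : ∀ t ∈ s, x 0 ≤ t) (hmax : ∀ t ∈ s, t ≤ x n) :
    ∃ φ : ℕ → ℕ, φ 0 = 0 ∧ φ n = M ∧ (∀ k < n, φ k < φ (k+1)) ∧
      (∀ k ≤ n, zfun s M hcard (φ k) = x k) := by
  classical
  set e := s.orderIsoOfFin hcard with he
  refine ⟨fun k => if h : k ≤ n then (e.symm ⟨x k, hmem k h⟩ : Fin (M+1)).val else M,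
    ?_, ?_, ?_, ?_⟩
  · beta_reduce
    rw [dif_pos (Nat.zero_le n)]
    have h1 : e.symm ⟨x 0, hmem 0 (Nat.zero_le n)⟩ ≤ 0 := by
      rw [OrderIso.symm_apply_le]
      exact Subtype.mk_le_mk.mpr (hmin _ (e 0).2)
    have h2 : (0 : Fin (M+1)) ≤ e.symm ⟨x 0, hmem 0 (Nat.zero_le n)⟩ := Fin.zero_le _
    have := le_antisymm h1 h2
    rw [this]; rfl
  · beta_reduce
    rw [dif_pos le_rfl]
    have h1 : Fin.last M ≤ e.symm ⟨x n, hmem n le_rfl⟩ := by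
      rw [OrderIso.le_symm_apply]
      exact Subtype.mk_le_mk.mpr (hmax _ (e (Fin.last M)).2)
    have h2 := Fin.le_last (e.symm ⟨x n, hmem n le_rfl⟩)
    rw [le_antisymm h2 h1]; rfl
  · intro k hk
    beta_reduce
    rw [dif_pos (by omega : k ≤ n), dif_pos (by omega : k+1 ≤ n)]
    have : e.symm ⟨x k, hmem k (by omega)⟩ < e.symm ⟨x (k+1), hmem (k+1) (by omega)⟩ := by
      apply e.symm.strictMono
      exact Subtype.mk_lt_mk.mpr (hxc k hk)
    exact this
  · intro k hk
    beta_reduce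
    rw [dif_pos hk]
    have hv : (e.symm ⟨x k, hmem k hk⟩ : Fin (M+1)).val ≤ M :=
      Nat.lt_succ_iff.mp (e.symm ⟨x k, hmem k hk⟩).isLt
    rw [zfun]
    have h2 : (⟨min (e.symm ⟨x k, hmem k hk⟩ : Fin (M+1)).val M,
        Nat.lt_succ_iff.mpr (min_le_right _ M)⟩ : Fin (M+1))
        = e.symm ⟨x k, hmem k hk⟩ := by
      apply Fin.ext
      exact min_eq_left hv
    rw [h2, OrderIso.apply_symm_apply]

lemma common_refinement (a b : ℝ) (x u : ℕ → ℝ) (n m : ℕ)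
    (hxc : ∀ k < n, x k < x (k+1)) (hx0 : x 0 = a) (hxn : x n = b)
    (huc : ∀ k < m, u k < u (k+1)) (hu0 : u 0 = a) (hum : u m = b) :
    ∃ (M : ℕ) (z : ℕ → ℝ) (φ ψ : ℕ → ℕ),
      (∀ i < M, z i < z (i+1)) ∧ (∀ i, z i ∈ Icc a b) ∧
      φ 0 = 0 ∧ φ n = M ∧ (∀ k < n, φ k < φ (k+1)) ∧ (∀ k ≤ n, z (φ k) = x k) ∧
      ψ 0 = 0 ∧ ψ m = M ∧ (∀ k < m, ψ k < ψ (k+1)) ∧ (∀ k ≤ m, z (ψ k) = u k) := by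
  classical
  set s : Finset ℝ := ((Finset.range (n+1)).image x) ∪ ((Finset.range (m+1)).image u)
    with hs
  have hmemx : ∀ k ≤ n, x k ∈ s := by
    intro k hk
    exact Finset.mem_union_left _ (Finset.mem_image_of_mem x
      (Finset.mem_range.mpr (by omega)))
  have hmemu : ∀ k ≤ m, u k ∈ s := by
    intro k hk
    exact Finset.mem_union_right _ (Finset.mem_image_of_mem u
      (Finset.mem_range.mpr (by omega)))
  have hxmono := mono_of_strict x n hxc
  have humono := mono_of_strict u m huc
  have hIcc : ∀ t ∈ s, a ≤ t ∧ t ≤ b := by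
    intro t ht
    rw [hs, Finset.mem_union] at ht
    rcases ht with ht | ht
    · obtain ⟨k, hk, rfl⟩ := Finset.mem_image.mp ht
      rw [Finset.mem_range] at hk
      constructor
      · rw [← hx0]; exact hxmono 0 k (Nat.zero_le _) (by omega)
      · rw [← hxn]; exact hxmono k n (by omega) le_rfl
    · obtain ⟨k, hk, rfl⟩ := Finset.mem_image.mp ht
      rw [Finset.mem_range] at hk
      constructor
      · rw [← hu0]; exact humono 0 k (Nat.zero_le _) (by omega)
      · rw [← hum]; exact humono k m (by omega) le_rfl
  have hne : s.Nonempty := ⟨x 0, hmemx 0 (Nat.zero_le n)⟩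
  have hcardpos : 1 ≤ s.card := Finset.Nonempty.card_pos hne
  set M := s.card - 1 with hM
  have hcard : s.card = M + 1 := by omega
  refine ⟨M, zfun s M hcard, ?_⟩
  obtain ⟨φ, hφ0, hφn, hφs, hφa⟩ := index_map s M hcard x n hxc hmemx
    (fun t ht => by rw [hx0]; exact (hIcc t ht).1)
    (fun t ht => by rw [hxn]; exact (hIcc t ht).2)
  obtain ⟨ψ, hψ0, hψm, hψs, hψa⟩ := index_map s M hcard u m huc hmemu
    (fun t ht => by rw [hu0]; exact (hIcc t ht).1)
    (fun t ht => by rw [hum]; exact (hIcc t ht).2)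
  exact ⟨φ, ψ, zfun_chain s M hcard, fun i => mem_Icc.mpr (hIcc _ (zfun_mem s M hcard i)),
    hφ0, hφn, hφs, hφa, hψ0, hψm, hψs, hψa⟩

section

variable (a b : ℝ) (γ δ : ℝ)
    (hγ0 : 0 < γ) (hδ0 : 0 < δ) (hsum : 1 < γ + δ)
    (ω W : ℝ → ℝ) (Cω CW : ℝ)
    (hω : ∀ x ∈ Icc a b, ∀ y ∈ Icc a b, |ω x - ω y| ≤ Cω * |x - y| ^ γ)
    (hW : ∀ x ∈ Icc a b, ∀ y ∈ Icc a b, |W x - W y| ≤ CW * |x - y| ^ δ)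

set_option linter.unusedSectionVars false

include hγ0 hδ0 hω hW in
lemma young_max (hCω : 0 ≤ Cω) (hCW : 0 ≤ CW) :
    ∀ n (x : ℕ → ℝ), (∀ k < n, x k < x (k+1)) → (∀ k ≤ n, x k ∈ Icc a b) →
    |RS W ω x n - W (x 0) * (ω (x n) - ω (x 0))|
      ≤ CW * Cω * (2*(x n - x 0))^(γ+δ) * ∑ m ∈ Finset.range n, 1/(m:ℝ)^(γ+δ) := by
  intro n
  induction n using Nat.strong_induction_on with
  | _ n IH =>
    match n with
    | 0 => intro x _ _; simp [RS]
    | 1 =>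
        intro x _ _
        have : RS W ω x 1 = W (x 0) * (ω (x 1) - ω (x 0)) := by simp [RS, pf]
        rw [this]
        simp only [Finset.sum_range_one, Nat.cast_zero,
          Real.zero_rpow (by linarith : γ + δ ≠ 0)]
        simp
    | (m+2) =>
        intro x hc hm
        obtain ⟨i, hi, hspan⟩ := min_triple x (m+1) (by omega) (fun k hk => hc k (by omega))
        set θ := γ + δ with hθ
        have hθpos : 0 < θ := by rw [hθ]; linarith
        set y : ℕ → ℝ := fun k => if k < i+1 then x k else x (k+1) with hy
        have hyc : ∀ k < m+1, y k < y (k+1) := by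
          intro k hk
          simp only [hy]
          rcases lt_trichotomy k i with h | h | h
          · rw [if_pos (by omega), if_pos (by omega)]; exact hc k (by omega)
          · subst h
            rw [if_pos (by omega), if_neg (by omega)]
            exact lt_trans (hc k (by omega)) (hc (k+1) (by omega))
          · rw [if_neg (by omega), if_neg (by omega)]; exact hc (k+1) (by omega)
        have hym : ∀ k ≤ m+1, y k ∈ Icc a b := by
          intro k hk
          simp only [hy]
          by_cases h : k < i+1
          · rw [if_pos h]; exact hm k (by omega)
          · rw [if_neg h]; exact hm (k+1) (by omega)
        have hy0 : y 0 = x 0 := by simp [hy]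
        have hytop : y (m+1) = x (m+2) := by simp only [hy]; rw [if_neg (by omega)]
        have IH' := IH (m+1) (by omega) y hyc hym
        rw [hy0, hytop] at IH'
        have hrem := removal_sum W ω x (m+1) i hi
        rw [← hy] at hrem
        set Ξ := W (x 0) * (ω (x (m+2)) - ω (x 0)) with hΞ
        set E := (W (x (i+1)) - W (x i)) * (ω (x (i+2)) - ω (x (i+1))) with hE
        set s := x (i+2) - x i with hs
        set L := x (m+2) - x 0 with hL
        have hspos : 0 < s := by
          rw [hs]
          have := mono_of_strict x (m+2) hc i (i+2) (by omega) (by omega)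
          have h1 := hc i (by omega)
          have h2 := hc (i+1) (by omega)
          linarith
        have hLpos : 0 < L := by
          rw [hL]
          have := mono_of_strict x (m+2) hc 0 (m+1) (by omega) (by omega)
          have h2 := hc (m+1) (by omega)
          linarith
        have hEW : |W (x (i+1)) - W (x i)| ≤ CW * s ^ δ := by
          have h1 := hW (x (i+1)) (hm (i+1) (by omega)) (x i) (hm i (by omega))
          have h2 : |x (i+1) - x i| ≤ s := by
            rw [abs_of_nonneg (by linarith [hc i (show i < m+2 by omega)])]
            have := mono_of_strict x (m+2) hc (i+1) (i+2) (by omega) (by omega)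
            rw [hs]; linarith
          calc |W (x (i+1)) - W (x i)| ≤ CW * |x (i+1) - x i| ^ δ := h1
            _ ≤ CW * s ^ δ := by
                apply mul_le_mul_of_nonneg_left _ hCW
                exact Real.rpow_le_rpow (abs_nonneg _) h2 hδ0.le
        have hEω : |ω (x (i+2)) - ω (x (i+1))| ≤ Cω * s ^ γ := by
          have h1 := hω (x (i+2)) (hm (i+2) (by omega)) (x (i+1)) (hm (i+1) (by omega))
          have h2 : |x (i+2) - x (i+1)| ≤ s := by
            rw [abs_of_nonneg (by linarith [hc (i+1) (show i+1 < m+2 by omega)])]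
            have := mono_of_strict x (m+2) hc i (i+1) (by omega) (by omega)
            rw [hs]; linarith
          calc |ω (x (i+2)) - ω (x (i+1))| ≤ Cω * |x (i+2) - x (i+1)| ^ γ := h1
            _ ≤ Cω * s ^ γ := by
                apply mul_le_mul_of_nonneg_left _ hCω
                exact Real.rpow_le_rpow (abs_nonneg _) h2 hγ0.le
        have hEbound : |E| ≤ CW * Cω * s ^ θ := by
          rw [hE, abs_mul]
          calc |W (x (i+1)) - W (x i)| * |ω (x (i+2)) - ω (x (i+1))|
              ≤ (CW * s ^ δ) * (Cω * s ^ γ) := by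
                apply mul_le_mul hEW hEω (abs_nonneg _)
                positivity
            _ = CW * Cω * s ^ θ := by
                rw [hθ, Real.rpow_add hspos]
                ring
        have hsθ : s ^ θ ≤ (2*L)^θ * (1/((m+1:ℕ):ℝ)^θ) := by
          have h1 : s ^ θ ≤ (2*L/(m+1))^θ := by
            apply Real.rpow_le_rpow hspos.le _ hθpos.le
            calc s ≤ 2*(x (m+2) - x 0)/(m+1) := by
                  rw [hs]
                  convert hspan using 3 <;> push_cast <;> ring
              _ = 2*L/(m+1) := by rw [hL]
          calc s ^ θ ≤ (2*L/(m+1))^θ := h1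
            _ = (2*L)^θ * (1/((m+1:ℕ):ℝ)^θ) := by
                rw [Real.div_rpow (by linarith) (by positivity)]
                push_cast
                ring
        have htri : |RS W ω x (m+2) - Ξ| ≤ |E| + |RS W ω y (m+1) - Ξ| := by
          have : RS W ω x (m+2) - Ξ = E + (RS W ω y (m+1) - Ξ) := by
            rw [hrem]; ring
          rw [this]
          exact abs_add_le _ _
        have hZ : ∑ k ∈ Finset.range (m+2), 1/(k:ℝ)^θ
            = (∑ k ∈ Finset.range (m+1), 1/(k:ℝ)^θ) + 1/((m+1:ℕ):ℝ)^θ := by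
          rw [Finset.sum_range_succ]
        rw [hθ] at *
        calc |RS W ω x (m+2) - Ξ| ≤ |E| + |RS W ω y (m+1) - Ξ| := htri
          _ ≤ CW * Cω * s ^ (γ+δ)
              + CW * Cω * (2*(x (m+2) - x 0))^(γ+δ) * ∑ k ∈ Finset.range (m+1), 1/(k:ℝ)^(γ+δ) := by
              exact add_le_add hEbound IH'
          _ ≤ CW * Cω * ((2*L)^(γ+δ) * (1/((m+1:ℕ):ℝ)^(γ+δ)))
              + CW * Cω * (2*L)^(γ+δ) * ∑ k ∈ Finset.range (m+1), 1/(k:ℝ)^(γ+δ) := by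
              apply add_le_add _ (le_of_eq (by rw [hL]))
              exact mul_le_mul_of_nonneg_left hsθ (by positivity)
          _ = CW * Cω * (2*L)^(γ+δ) * ∑ k ∈ Finset.range (m+2), 1/(k:ℝ)^(γ+δ) := by
              rw [hZ]; ring
          _ = CW * Cω * (2*(x (m+2) - x 0))^(γ+δ) * ∑ k ∈ Finset.range (m+2), 1/(k:ℝ)^(γ+δ) := by
              rw [hL]

include hγ0 hδ0 hsum hω hW in
lemma young_max' (hCω : 0 ≤ Cω) (hCW : 0 ≤ CW)
    (n : ℕ) (x : ℕ → ℝ) (hc : ∀ k < n, x k < x (k+1)) (hm : ∀ k ≤ n, x k ∈ Icc a b) :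
    |RS W ω x n - W (x 0) * (ω (x n) - ω (x 0))|
      ≤ (CW * Cω * 2^(γ+δ) * ∑' m : ℕ, 1/(m:ℝ)^(γ+δ)) * (x n - x 0)^(γ+δ) := by
  have hθ1 : 1 < γ + δ := hsum
  have hsummable : Summable (fun m : ℕ => 1/(m:ℝ)^(γ+δ)) :=
    Real.summable_one_div_nat_rpow.mpr hθ1
  have hZle : ∑ m ∈ Finset.range n, 1/(m:ℝ)^(γ+δ) ≤ ∑' m : ℕ, 1/(m:ℝ)^(γ+δ) :=
    hsummable.sum_le_tsum _ (fun i _ => by positivity)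
  have hL : 0 ≤ x n - x 0 := by
    have := mono_of_strict x n hc 0 n (Nat.zero_le n) le_rfl
    linarith
  have h2 : (2*(x n - x 0))^(γ+δ) = 2^(γ+δ) * (x n - x 0)^(γ+δ) :=
    Real.mul_rpow (by norm_num) hL
  calc |RS W ω x n - W (x 0) * (ω (x n) - ω (x 0))|
      ≤ CW * Cω * (2*(x n - x 0))^(γ+δ) * ∑ m ∈ Finset.range n, 1/(m:ℝ)^(γ+δ) :=
        young_max a b γ δ hγ0 hδ0 ω W Cω CW hω hW hCω hCW n x hc hm
    _ ≤ CW * Cω * (2*(x n - x 0))^(γ+δ) * ∑' m : ℕ, 1/(m:ℝ)^(γ+δ) := by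
        apply mul_le_mul_of_nonneg_left hZle
        positivity
    _ = (CW * Cω * 2^(γ+δ) * ∑' m : ℕ, 1/(m:ℝ)^(γ+δ)) * (x n - x 0)^(γ+δ) := by
        rw [h2]; ring

include hγ0 hδ0 hsum hω hW in
lemma refine_bound (hCω : 0 ≤ Cω) (hCW : 0 ≤ CW)
    (n M : ℕ) (x z : ℕ → ℝ) (φ : ℕ → ℕ)
    (hzc : ∀ i < M, z i < z (i+1)) (hzm : ∀ i ≤ M, z i ∈ Icc a b)
    (hφ0 : φ 0 = 0) (hφn : φ n = M)
    (hφs : ∀ k < n, φ k < φ (k+1))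
    (hagree : ∀ k ≤ n, z (φ k) = x k) :
    |RS W ω z M - RS W ω x n|
      ≤ (CW * Cω * 2^(γ+δ) * ∑' m : ℕ, 1/(m:ℝ)^(γ+δ))
          * ∑ k ∈ Finset.range n, (x (k+1) - x k)^(γ+δ) := by
  have hφmono := mono_of_strict φ n hφs
  set KK := CW * Cω * 2^(γ+δ) * ∑' m : ℕ, 1/(m:ℝ)^(γ+δ) with hKK
  set B : ℕ → ℝ := fun k => ∑ i ∈ Finset.Ico (φ k) (φ (k+1)), pf W ω z i with hB
  have hsplit : ∀ j ≤ n, ∑ k ∈ Finset.range j, B k = ∑ i ∈ Finset.Ico 0 (φ j), pf W ω z i := by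
    intro j hj
    induction j with
    | zero => simp [hφ0]
    | succ j ihj =>
        rw [Finset.sum_range_succ, ihj (by omega), hB]
        exact Finset.sum_Ico_consecutive _ (Nat.zero_le _) (hφmono j (j+1) (by omega) hj)
  have hRSz : RS W ω z M = ∑ k ∈ Finset.range n, B k := by
    rw [hsplit n le_rfl, hφn, RS, Finset.range_eq_Ico]
  have hblock : ∀ k < n, |B k - pf W ω x k| ≤ KK * (x (k+1) - x k)^(γ+δ) := by
    intro k hk
    set w : ℕ → ℝ := fun i => z (φ k + i) with hw
    set mk := φ (k+1) - φ k with hmk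
    have hφk1 : φ (k+1) ≤ M := by rw [← hφn]; exact hφmono (k+1) n hk le_rfl
    have hBk : B k = RS W ω w mk := by
      show ∑ i ∈ Finset.Ico (φ k) (φ (k+1)), pf W ω z i = RS W ω w mk
      rw [RS, Finset.sum_Ico_eq_sum_range]
      exact Finset.sum_congr rfl fun i _ => rfl
    have hw0 : w 0 = x k := by
      rw [hw]; simpa using hagree k (by omega)
    have hwtop : w mk = x (k+1) := by
      rw [hw, hmk]
      simp only []
      rw [Nat.add_sub_cancel' (le_of_lt (hφs k hk))]
      exact hagree (k+1) (by omega)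
    have hφlt := hφs k hk
    have hwc : ∀ i < mk, w i < w (i+1) := by
      intro i hi
      rw [hmk] at hi
      show z (φ k + i) < z (φ k + i + 1)
      exact hzc _ (by omega)
    have hwm : ∀ i ≤ mk, w i ∈ Icc a b := by
      intro i hi
      rw [hmk] at hi
      show z (φ k + i) ∈ Icc a b
      exact hzm _ (by omega)
    have := young_max' a b γ δ hγ0 hδ0 hsum ω W Cω CW hω hW hCω hCW mk w hwc hwm
    rw [hw0, hwtop] at this
    rw [hBk]
    calc |RS W ω w mk - pf W ω x k|
        = |RS W ω w mk - W (x k) * (ω (x (k+1)) - ω (x k))| := by rw [pf]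
      _ ≤ KK * (x (k+1) - x k)^(γ+δ) := this
  have hKKnn : 0 ≤ KK := by
    rw [hKK]
    have : 0 ≤ ∑' m : ℕ, 1/(m:ℝ)^(γ+δ) := tsum_nonneg fun i => by positivity
    positivity
  calc |RS W ω z M - RS W ω x n|
      = |∑ k ∈ Finset.range n, (B k - pf W ω x k)| := by
        rw [hRSz, RS, Finset.sum_sub_distrib]
    _ ≤ ∑ k ∈ Finset.range n, |B k - pf W ω x k| := Finset.abs_sum_le_sum_abs _ _
    _ ≤ ∑ k ∈ Finset.range n, KK * (x (k+1) - x k)^(γ+δ) :=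
        Finset.sum_le_sum fun k hk => hblock k (Finset.mem_range.mp hk)
    _ = KK * ∑ k ∈ Finset.range n, (x (k+1) - x k)^(γ+δ) := by
        rw [Finset.mul_sum]

include hγ0 hδ0 hsum hω hW in
lemma two_partitions (hCω : 0 ≤ Cω) (hCW : 0 ≤ CW)
    (n m : ℕ) (x u : ℕ → ℝ)
    (hxc : ∀ k < n, x k < x (k+1)) (hx0 : x 0 = a) (hxn : x n = b)
    (huc : ∀ k < m, u k < u (k+1)) (hu0 : u 0 = a) (hum : u m = b)
    (ρx ρu : ℝ)
    (hmx : ∀ k < n, x (k+1) - x k ≤ ρx) (hmu : ∀ k < m, u (k+1) - u k ≤ ρu) :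
    |RS W ω x n - RS W ω u m|
      ≤ (CW * Cω * 2^(γ+δ) * ∑' i : ℕ, 1/(i:ℝ)^(γ+δ)) * (ρx^(γ+δ-1) * (b - a))
        + (CW * Cω * 2^(γ+δ) * ∑' i : ℕ, 1/(i:ℝ)^(γ+δ)) * (ρu^(γ+δ-1) * (b - a)) := by
  set KK := CW * Cω * 2^(γ+δ) * ∑' i : ℕ, 1/(i:ℝ)^(γ+δ) with hKK
  have hKKnn : 0 ≤ KK := by
    rw [hKK]
    have : 0 ≤ ∑' i : ℕ, 1/(i:ℝ)^(γ+δ) := tsum_nonneg fun i => by positivity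
    positivity
  obtain ⟨M, z, φ, ψ, hzc, hzm, hφ0, hφn, hφs, hφa, hψ0, hψm, hψs, hψa⟩ :=
    common_refinement a b x u n m hxc hx0 hxn huc hu0 hum
  have hbx := refine_bound a b γ δ hγ0 hδ0 hsum ω W Cω CW hω hW hCω hCW n M x z φ
    hzc (fun i _ => hzm i) hφ0 hφn hφs hφa
  have hbu := refine_bound a b γ δ hγ0 hδ0 hsum ω W Cω CW hω hW hCω hCW m M u z ψ
    hzc (fun i _ => hzm i) hψ0 hψm hψs hψa
  have hmsx : ∑ k ∈ Finset.range n, (x (k+1) - x k)^(γ+δ) ≤ ρx^(γ+δ-1) * (b - a) := by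
    have := mesh_sum (γ+δ) hsum n x hxc ρx hmx
    rwa [hxn, hx0] at this
  have hmsu : ∑ k ∈ Finset.range m, (u (k+1) - u k)^(γ+δ) ≤ ρu^(γ+δ-1) * (b - a) := by
    have := mesh_sum (γ+δ) hsum m u huc ρu hmu
    rwa [hum, hu0] at this
  calc |RS W ω x n - RS W ω u m|
      ≤ |RS W ω z M - RS W ω x n| + |RS W ω z M - RS W ω u m| := by
        rw [abs_sub_comm (RS W ω z M) (RS W ω x n)]
        exact abs_sub_le _ _ _
    _ ≤ KK * ∑ k ∈ Finset.range n, (x (k+1) - x k)^(γ+δ)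
        + KK * ∑ k ∈ Finset.range m, (u (k+1) - u k)^(γ+δ) := add_le_add hbx hbu
    _ ≤ KK * (ρx^(γ+δ-1) * (b - a)) + KK * (ρu^(γ+δ-1) * (b - a)) :=
        add_le_add (mul_le_mul_of_nonneg_left hmsx hKKnn)
          (mul_le_mul_of_nonneg_left hmsu hKKnn)

end

lemma rho_choice (C θ1 : ℝ) (hC : 0 ≤ C) (hθ1 : 0 < θ1) :
    ∀ ε > (0:ℝ), ∃ ρ > (0:ℝ), C * ρ^θ1 < ε := by
  intro ε hε
  have hC1 : (0:ℝ) < C + 1 := by linarith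
  have hbase : (0:ℝ) < ε / (C+1) := by positivity
  refine ⟨(ε / (C+1))^(1/θ1), Real.rpow_pos_of_pos hbase _, ?_⟩
  have hρ : ((ε / (C+1))^(1/θ1))^θ1 = ε / (C+1) := by
    rw [← Real.rpow_mul hbase.le, one_div, inv_mul_cancel₀ hθ1.ne', Real.rpow_one]
  rw [hρ, mul_div_assoc']
  rw [div_lt_iff₀ hC1]
  nlinarith

/-- Pathwise Young integral: if `ω` is `γ`-Hölder and `W` is `δ`-Hölder on `[a,b]` with
`γ + δ > 1`, then the Riemann sums `Σ_k W(x_k)(ω(x_{k+1}) − ω(x_k))` converge to a limit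
as the mesh of the partition `a = x_0 < … < x_n = b` tends to zero. -/
theorem young_integral_exists (a b : ℝ) (hab : a < b) (γ δ : ℝ)
    (hγ0 : 0 < γ) (hγ1 : γ ≤ 1) (hδ0 : 0 < δ) (hδ1 : δ ≤ 1) (hsum : 1 < γ + δ)
    (ω W : ℝ → ℝ) (Cω CW : ℝ)
    (hω : ∀ x ∈ Icc a b, ∀ y ∈ Icc a b, |ω x - ω y| ≤ Cω * |x - y| ^ γ)
    (hW : ∀ x ∈ Icc a b, ∀ y ∈ Icc a b, |W x - W y| ≤ CW * |x - y| ^ δ) :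
    ∃ L : ℝ, ∀ ε > (0 : ℝ), ∃ ρ > (0 : ℝ), ∀ (n : ℕ) (x : Fin (n + 1) → ℝ),
      x 0 = a → x (Fin.last n) = b →
      (∀ k : Fin n, x k.castSucc < x k.succ) →
      (∀ k : Fin n, x k.succ - x k.castSucc < ρ) →
      |(∑ k : Fin n, W (x k.castSucc) * (ω (x k.succ) - ω (x k.castSucc))) - L| < ε := by
  have hamem : a ∈ Icc a b := ⟨le_refl a, hab.le⟩
  have hbmem : b ∈ Icc a b := ⟨hab.le, le_refl b⟩
  have habs : (0:ℝ) < |a - b| := by rw [abs_sub_comm, abs_of_pos (by linarith)]; linarith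
  have hCW : 0 ≤ CW := by
    have h := hW a hamem b hbmem
    have hp : (0:ℝ) < |a - b| ^ δ := Real.rpow_pos_of_pos habs δ
    nlinarith [abs_nonneg (W a - W b)]
  have hCω : 0 ≤ Cω := by
    have h := hω a hamem b hbmem
    have hp : (0:ℝ) < |a - b| ^ γ := Real.rpow_pos_of_pos habs γ
    nlinarith [abs_nonneg (ω a - ω b)]
  set KK := CW * Cω * 2^(γ+δ) * ∑' i : ℕ, 1/(i:ℝ)^(γ+δ) with hKK
  have hKKnn : 0 ≤ KK := by
    rw [hKK]
    have : 0 ≤ ∑' i : ℕ, 1/(i:ℝ)^(γ+δ) := tsum_nonneg fun i => by positivity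
    positivity
  set C : ℝ := KK * (b - a) with hC
  have hCnn : 0 ≤ C := by
    rw [hC]; apply mul_nonneg hKKnn; linarith
  have hθ1 : (0:ℝ) < γ + δ - 1 := by linarith
  -- uniform partitions
  set U : ℕ → ℕ → ℝ := fun N k => a + (b - a) * k / (N+1) with hU
  have hba : (0:ℝ) < b - a := by linarith
  have hUc : ∀ N, ∀ k, U N k < U N (k+1) := by
    intro N k
    simp only [hU]
    have hinv : (0:ℝ) < ((N:ℝ)+1)⁻¹ := by positivity
    push_cast
    rw [div_eq_mul_inv, div_eq_mul_inv]
    nlinarith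
  have hU0 : ∀ N, U N 0 = a := by
    intro N; simp [hU]
  have hUtop : ∀ N, U N (N+1) = b := by
    intro N
    simp only [hU]
    have hN : ((N:ℝ)+1) ≠ 0 := by positivity
    push_cast
    field_simp
    ring
  have hUmesh : ∀ N k, U N (k+1) - U N k = (b-a)/(N+1) := by
    intro N k
    simp only [hU]
    have hN : ((N:ℝ)+1) ≠ 0 := by positivity
    push_cast
    field_simp
    ring
  set S : ℕ → ℝ := fun N => RS W ω (U N) (N+1) with hS
  have hmeshρ : ∀ (ρ : ℝ), 0 < ρ → ∀ N ≥ ⌈(b-a)/ρ⌉₊, ∀ k, U N (k+1) - U N k ≤ ρ := by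
    intro ρ hρ N hN k
    rw [hUmesh]
    rw [div_le_iff₀ (by positivity)]
    have h1 : (b-a)/ρ ≤ (⌈(b-a)/ρ⌉₊ : ℝ) := Nat.le_ceil _
    have h2 : ((⌈(b-a)/ρ⌉₊ : ℕ) : ℝ) ≤ (N:ℝ) := by exact_mod_cast hN
    have h3 : (b-a)/ρ ≤ (N:ℝ) + 1 := by linarith
    rw [div_le_iff₀ hρ] at h3
    linarith
  have hScauchy : CauchySeq S := by
    rw [Metric.cauchySeq_iff]
    intro ε hε
    obtain ⟨ρ, hρ, hρε⟩ := rho_choice C (γ+δ-1) hCnn hθ1 (ε/2) (by linarith)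
    refine ⟨⌈(b-a)/ρ⌉₊, ?_⟩
    intro p hp q hq
    have h2p := two_partitions a b γ δ hγ0 hδ0 hsum ω W Cω CW hω hW hCω hCW
      (p+1) (q+1) (U p) (U q)
      (fun k _ => hUc p k) (hU0 p) (hUtop p)
      (fun k _ => hUc q k) (hU0 q) (hUtop q)
      ρ ρ (fun k _ => hmeshρ ρ hρ p hp k) (fun k _ => hmeshρ ρ hρ q hq k)
    rw [Real.dist_eq]
    have heq : (CW * Cω * 2^(γ+δ) * ∑' i : ℕ, 1/(i:ℝ)^(γ+δ)) * (ρ^(γ+δ-1) * (b - a))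
        = C * ρ^(γ+δ-1) := by rw [hC, hKK]; ring
    rw [heq] at h2p
    calc |S p - S q| ≤ C * ρ^(γ+δ-1) + C * ρ^(γ+δ-1) := h2p
      _ < ε/2 + ε/2 := by linarith
      _ = ε := by ring
  obtain ⟨L, hL⟩ := cauchySeq_tendsto_of_complete hScauchy
  refine ⟨L, ?_⟩
  intro ε hε
  obtain ⟨ρ, hρ, hρε⟩ := rho_choice C (γ+δ-1) hCnn hθ1 (ε/3) (by linarith)
  refine ⟨ρ, hρ, ?_⟩
  intro n x hx0 hxn hxc hxmesh
  obtain ⟨N₁, hN₁⟩ := Metric.tendsto_atTop.mp hL (ε/3) (by linarith)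
  set N := max N₁ ⌈(b-a)/ρ⌉₊ with hN
  have hdistL : |S N - L| < ε/3 := by
    rw [← Real.dist_eq]; exact hN₁ N (le_max_left _ _)
  have hmeshU : ∀ k, U N (k+1) - U N k ≤ ρ := hmeshρ ρ hρ N (le_max_right _ _)
  set X : ℕ → ℝ := fun k => x ⟨min k n, by omega⟩ with hX
  have hXval : ∀ k ≤ n, ∀ (h : k < n+1), X k = x ⟨k, h⟩ := by
    intro k hk h
    simp only [hX]
    congr 1
    apply Fin.ext
    simp only []
    omega
  have hX0 : X 0 = a := by
    rw [hXval 0 (by omega) (by omega), ← hx0]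
    exact congrArg x (Fin.ext (by simp))
  have hXn : X n = b := by
    rw [hXval n le_rfl (by omega), ← hxn]
    exact congrArg x (Fin.ext (by simp))
  have hcast : ∀ (k : Fin n), x k.castSucc = X k.val ∧ x k.succ = X (k.val + 1) := by
    intro k
    constructor
    · rw [hXval k.val (by omega) (by omega)]
      exact congrArg x (Fin.ext (by simp))
    · rw [hXval (k.val+1) (by omega) (by omega)]
      exact congrArg x (Fin.ext (by simp))
  have hXc : ∀ k < n, X k < X (k+1) := by
    intro k hk
    have h := hxc ⟨k, hk⟩
    obtain ⟨e1, e2⟩ := hcast ⟨k, hk⟩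
    rwa [e1, e2] at h
  have hXmesh : ∀ k < n, X (k+1) - X k ≤ ρ := by
    intro k hk
    have h := hxmesh ⟨k, hk⟩
    obtain ⟨e1, e2⟩ := hcast ⟨k, hk⟩
    rw [e1, e2] at h
    exact h.le
  have hEq : ∑ k : Fin n, W (x k.castSucc) * (ω (x k.succ) - ω (x k.castSucc))
      = RS W ω X n := by
    rw [RS, ← Fin.sum_univ_eq_sum_range (fun k => pf W ω X k) n]
    apply Finset.sum_congr rfl
    intro k _
    obtain ⟨e1, e2⟩ := hcast k
    rw [pf, e1, e2]
  have h2p := two_partitions a b γ δ hγ0 hδ0 hsum ω W Cω CW hω hW hCω hCW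
    n (N+1) X (U N) hXc hX0 hXn
    (fun k _ => hUc N k) (hU0 N) (hUtop N)
    ρ ρ hXmesh (fun k _ => hmeshU k)
  have heq : (CW * Cω * 2^(γ+δ) * ∑' i : ℕ, 1/(i:ℝ)^(γ+δ)) * (ρ^(γ+δ-1) * (b - a))
      = C * ρ^(γ+δ-1) := by rw [hC, hKK]; ring
  rw [heq] at h2p
  rw [hEq]
  calc |RS W ω X n - L| ≤ |RS W ω X n - S N| + |S N - L| := by
        have : RS W ω X n - L = (RS W ω X n - S N) + (S N - L) := by ring
        rw [this]; exact abs_add_le _ _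
    _ ≤ (C * ρ^(γ+δ-1) + C * ρ^(γ+δ-1)) + |S N - L| := by
        apply add_le_add_left
        exact h2p
    _ < (ε/3 + ε/3) + ε/3 := by
        apply add_lt_add (add_lt_add hρε hρε) hdistL
    _ = ε := by ring
end

section
/- (Breeden–Litzenberger replication formula.) Let a ≤ K₀ ≤ b be reals and let W : [a,b] → ℝ be twice continuously differentiable. Then for every x ∈ [a,b]: W(x) = W(K₀) + W′(K₀)·(x − K₀) + ∫_a^{K₀} W″(K)·max(K − x, 0) dK + ∫_{K₀}^{b} W″(K)·max(x − K, 0) dK. -/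
open Set intervalIntegral

/-- Breeden–Litzenberger replication formula: a twice continuously differentiable
state-contingent payoff `W` on `[a,b]` decomposes, for every `x ∈ [a,b]`, as cash
`W(K₀)`, a forward position `W′(K₀)(x − K₀)`, and portfolios of puts `max(K − x, 0)` and
calls `max(x − K, 0)` with densities `W″(K)` over strikes `K` below and above `K₀`. -/
theorem breeden_litzenberger (a b K₀ : ℝ) (haK : a ≤ K₀) (hKb : K₀ ≤ b)
    (W W' W'' : ℝ → ℝ)
    (hW : ∀ x ∈ Icc a b, HasDerivWithinAt W (W' x) (Icc a b) x)
    (hW' : ∀ x ∈ Icc a b, HasDerivWithinAt W' (W'' x) (Icc a b) x)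
    (hW'' : ContinuousOn W'' (Icc a b)) :
    ∀ x ∈ Icc a b,
      W x = W K₀ + W' K₀ * (x - K₀)
        + (∫ K in a..K₀, W'' K * max (K - x) 0)
        + ∫ K in K₀..b, W'' K * max (x - K) 0 := by
  intro x hx
  obtain ⟨hax, hxb⟩ := hx
  have hxI : x ∈ Icc a b := ⟨hax, hxb⟩
  have hK₀ : K₀ ∈ Icc a b := ⟨haK, hKb⟩
  have haI : a ∈ Icc a b := ⟨le_refl a, le_trans haK hKb⟩
  have hbI : b ∈ Icc a b := ⟨le_trans haK hKb, le_refl b⟩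
  set g : ℝ → ℝ := fun K => W' K * (x - K) + W K with hg
  have hgderiv : ∀ K ∈ Icc a b, HasDerivWithinAt g (W'' K * (x - K)) (Icc a b) K := by
    intro K hK
    have h2 : HasDerivWithinAt (fun K : ℝ => x - K) (-1) (Icc a b) K := by
      simpa using (hasDerivWithinAt_id K (Icc a b)).const_sub x
    have h1 := ((hW' K hK).mul h2).add (hW K hK)
    convert h1 using 1
    · rfl
    · rfl
    · rfl
    · ring
  have hWcont : ContinuousOn W (Icc a b) := fun y hy => (hW y hy).continuousWithinAt
  have hW'cont : ContinuousOn W' (Icc a b) := fun y hy => (hW' y hy).continuousWithinAt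
  have hgcont : ContinuousOn g (Icc a b) :=
    (hW'cont.mul ((continuous_const.sub continuous_id).continuousOn)).add hWcont
  have ftc : ∀ c d : ℝ, c ∈ Icc a b → d ∈ Icc a b →
      (∫ K in c..d, W'' K * (x - K)) = g d - g c := by
    intro c d hc hd
    have hsub : uIcc c d ⊆ Icc a b := uIcc_subset_Icc hc hd
    apply intervalIntegral.integral_eq_sub_of_hasDeriv_right
    · exact hgcont.mono hsub
    · intro y hy
      have hy' : y ∈ Ioo a b := by
        constructor
        · exact lt_of_le_of_lt (le_min hc.1 hd.1) hy.1
        · exact lt_of_lt_of_le hy.2 (max_le hc.2 hd.2)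
      exact ((hgderiv y (Ioo_subset_Icc_self hy')).hasDerivAt
        (Icc_mem_nhds hy'.1 hy'.2)).hasDerivWithinAt
    · exact ((hW''.mono hsub).mul
        ((continuous_const.sub continuous_id).continuousOn)).intervalIntegrable
  have hgx : g x = W x := by simp [hg]
  have hgK₀ : g K₀ = W' K₀ * (x - K₀) + W K₀ := rfl
  have key : (∫ K in K₀..x, W'' K * (x - K)) = W x - (W' K₀ * (x - K₀) + W K₀) := by
    rw [ftc K₀ x hK₀ hxI, hgx, hgK₀]
  have hcontcall : ContinuousOn (fun K => W'' K * max (x - K) 0) (Icc a b) :=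
    hW''.mul (((continuous_const.sub continuous_id).max continuous_const).continuousOn)
  have hcontput : ContinuousOn (fun K => W'' K * max (K - x) 0) (Icc a b) :=
    hW''.mul (((continuous_id.sub continuous_const).max continuous_const).continuousOn)
  rcases le_total K₀ x with hcase | hcase
  · -- K₀ ≤ x : put integral vanishes, call integral is the Taylor remainder
    have hput : (∫ K in a..K₀, W'' K * max (K - x) 0) = 0 := by
      rw [intervalIntegral.integral_congr (g := fun _ => (0 : ℝ))]
      · simp
      · intro K hK
        rw [uIcc_of_le haK] at hK
        have : K - x ≤ 0 := sub_nonpos.mpr (le_trans hK.2 hcase)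
        simp [max_eq_right this]
    have hsplit : (∫ K in K₀..x, W'' K * max (x - K) 0)
        + (∫ K in x..b, W'' K * max (x - K) 0)
        = ∫ K in K₀..b, W'' K * max (x - K) 0 := by
      apply intervalIntegral.integral_add_adjacent_intervals
      · exact (hcontcall.mono (uIcc_subset_Icc hK₀ hxI)).intervalIntegrable
      · exact (hcontcall.mono (uIcc_subset_Icc hxI hbI)).intervalIntegrable
    have h1 : (∫ K in K₀..x, W'' K * max (x - K) 0) = ∫ K in K₀..x, W'' K * (x - K) := by
      apply intervalIntegral.integral_congr
      intro K hK
      rw [uIcc_of_le hcase] at hK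
      have : 0 ≤ x - K := sub_nonneg.mpr hK.2
      simp [max_eq_left this]
    have h2 : (∫ K in x..b, W'' K * max (x - K) 0) = 0 := by
      rw [intervalIntegral.integral_congr (g := fun _ => (0 : ℝ))]
      · simp
      · intro K hK
        rw [uIcc_of_le hxb] at hK
        have : x - K ≤ 0 := sub_nonpos.mpr hK.1
        simp [max_eq_right this]
    rw [hput, ← hsplit, h1, h2, key]
    ring
  · -- x ≤ K₀ : call integral vanishes, put integral is the Taylor remainder
    have hcall : (∫ K in K₀..b, W'' K * max (x - K) 0) = 0 := by
      rw [intervalIntegral.integral_congr (g := fun _ => (0 : ℝ))]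
      · simp
      · intro K hK
        rw [uIcc_of_le hKb] at hK
        have : x - K ≤ 0 := sub_nonpos.mpr (le_trans hcase hK.1)
        simp [max_eq_right this]
    have hsplit : (∫ K in a..x, W'' K * max (K - x) 0)
        + (∫ K in x..K₀, W'' K * max (K - x) 0)
        = ∫ K in a..K₀, W'' K * max (K - x) 0 := by
      apply intervalIntegral.integral_add_adjacent_intervals
      · exact (hcontput.mono (uIcc_subset_Icc haI hxI)).intervalIntegrable
      · exact (hcontput.mono (uIcc_subset_Icc hxI hK₀)).intervalIntegrable
    have h1 : (∫ K in a..x, W'' K * max (K - x) 0) = 0 := by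
      rw [intervalIntegral.integral_congr (g := fun _ => (0 : ℝ))]
      · simp
      · intro K hK
        rw [uIcc_of_le hax] at hK
        have : K - x ≤ 0 := sub_nonpos.mpr hK.2
        simp [max_eq_right this]
    have h2a : (∫ K in x..K₀, W'' K * max (K - x) 0)
        = ∫ K in x..K₀, -(W'' K * (x - K)) := by
      apply intervalIntegral.integral_congr
      intro K hK
      rw [uIcc_of_le hcase] at hK
      have : 0 ≤ K - x := sub_nonneg.mpr hK.1
      simp only [max_eq_left this]
      ring
    have h2 : (∫ K in x..K₀, W'' K * max (K - x) 0) = ∫ K in K₀..x, W'' K * (x - K) := by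
      rw [h2a, intervalIntegral.integral_neg, intervalIntegral.integral_symm x K₀]
    rw [hcall, ← hsplit, h1, h2, key]
    ring
end
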